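/- Let E be a finite-dimensional real inner product space, let S ⊆ E be a nonempty convex set, and let h, g : E → ℝ be differentiable on an open set containing S, with g concave. Suppose x* ∈ S maximizes over S the function x ↦ h(x) − (g(x*) + ⟨∇g(x*), x − x*⟩). Then for every x' ∈ S one has ⟨∇g(x*) − ∇h(x*), x' − x*⟩ ≥ 0; that is, x* satisfies the first-order necessary condition for local optimality of the problem of maximizing h − g over S. -/

import Mathlib

/-- A fixed point of the majorize–minimize iteration satisfies the first-order
necessary (variational inequality) condition for local optimality of the
problem of maximizing `h − g` over the convex set `S`: if `x*` maximizes over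
`S` the surrogate `x ↦ h x − (g x* + ⟪∇g x*, x − x*⟫)`, then
`⟪∇g x* − ∇h x*, x' − x*⟫ ≥ 0` for all `x' ∈ S`. -/
theorem mm_fixed_point_stationarity {E : Type*} [NormedAddCommGroup E]
    [InnerProductSpace ℝ E] [FiniteDimensional ℝ E]
    (S U : Set E) (hSne : S.Nonempty) (hSconv : Convex ℝ S)
    (hUopen : IsOpen U) (hUconv : Convex ℝ U) (hSU : S ⊆ U)
    (h g : E → ℝ) (Gh Gg : E → E)
    (hgconc : ConcaveOn ℝ U g)
    (hhdiff : ∀ x ∈ U, HasGradientAt h (Gh x) x)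
    (hgdiff : ∀ x ∈ U, HasGradientAt g (Gg x) x)
    (xs : E) (hxs : xs ∈ S)
    (hmax : ∀ y ∈ S,
      h y - (g xs + (inner ℝ (Gg xs) (y - xs) : ℝ)) ≤
        h xs - (g xs + (inner ℝ (Gg xs) (xs - xs) : ℝ))) :
    ∀ x' ∈ S, (0 : ℝ) ≤ inner ℝ (Gg xs - Gh xs) (x' - xs) := by
  intro x' hx'
  set φ : E → ℝ := fun y => h y - inner ℝ (Gg xs) y with hφ
  have hmaxOn : IsLocalMaxOn φ S xs := by
    apply Filter.eventually_of_mem self_mem_nhdsWithin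
    intro y hy
    have := hmax y hy
    simp only [φ, inner_sub_right, sub_self, inner_zero_right] at this ⊢
    linarith
  have hder : HasFDerivWithinAt φ
      ((innerSL ℝ (Gh xs)) - (innerSL ℝ (Gg xs))) S xs := by
    have h1 : HasFDerivAt h (innerSL ℝ (Gh xs)) xs :=
      (hhdiff xs (hSU hxs)).hasFDerivAt
    have h2 : HasFDerivAt (fun y : E => (inner ℝ (Gg xs) y : ℝ))
        (innerSL ℝ (Gg xs)) xs := (innerSL ℝ (Gg xs)).hasFDerivAt
    exact (h1.sub h2).hasFDerivWithinAt
  have hcone : x' - xs ∈ posTangentConeAt S xs :=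
    sub_mem_posTangentConeAt_of_segment_subset (hSconv.segment_subset hxs hx')
  have := hmaxOn.hasFDerivWithinAt_nonpos hder hcone
  simp only [ContinuousLinearMap.sub_apply, innerSL_apply_apply] at this
  rw [inner_sub_left]
  linarith
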